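/- arXiv:1201.3196 — 3 statements merged into one kernel-verified Lean document; each statement's English description precedes it below -/
import Mathlib

section
/- Let f be a C¹ solution on [0,R) of the profile ODE with f(0)=1, f'(0)=0, and suppose f > 0 and f' < 0 on (0,R). If r_m ∈ (0,R] is a point where f' attains its minimum over [0,R] and either f''(r_m)=0 or f''(r_m) ≤ 0, then βμ f(r_m) ≥ |f'(r_m)|^{p/2}, and consequently |f'(r)| ≤ (βμ)^{2/p} for all r ∈ [0,R]. -/
theorem gradient_bound (N : ℕ) (hN : 1 ≤ N) (p μ β R : ℝ)
    (hp1 : 2 * N / (N + 1) < p) (hp2 : p < 2)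
    (hμ : μ = p / (2 - p)) (hβ : 0 < β) (hR : 0 < R)
    (f : ℝ → ℝ) (hfc : ContinuousOn f (Set.Icc 0 R))
    (hf1 : ∀ r ∈ Set.Ioc 0 R, DifferentiableAt ℝ f r)
    (hf2 : ∀ r ∈ Set.Ioc 0 R, DifferentiableAt ℝ (deriv f) r)
    (hode : ∀ r ∈ Set.Ioc 0 R,
      deriv (fun s => |deriv f s| ^ (p - 2) * deriv f s) r
        + ((N : ℝ) - 1) / r * (|deriv f r| ^ (p - 2) * deriv f r)
        + β * μ * f r + β * r * deriv f r - |deriv f r| ^ (p / 2) = 0)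
    (hf0 : f 0 = 1) (hf'0 : deriv f 0 = 0)
    (hpos : ∀ r ∈ Set.Ioo 0 R, 0 < f r)
    (hneg : ∀ r ∈ Set.Ioo 0 R, deriv f r < 0)
    (r_m : ℝ) (hrm : r_m ∈ Set.Ioc 0 R)
    (hmin : ∀ r ∈ Set.Icc 0 R, deriv f r_m ≤ deriv f r)
    (hsec : deriv (deriv f) r_m ≤ 0) :
    |deriv f r_m| ^ (p / 2) ≤ β * μ * f r_m ∧
      ∀ r ∈ Set.Icc 0 R, |deriv f r| ≤ (β * μ) ^ (2 / p) := by
  have hNR : (1:ℝ) ≤ (N:ℝ) := by exact_mod_cast hN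
  have hp1' : 1 < p := by
    refine lt_of_le_of_lt ?_ hp1
    rw [le_div_iff₀ (by linarith)]
    linarith
  have hp0 : 0 < p := by linarith
  have hμ0 : 0 < μ := by rw [hμ]; exact div_pos hp0 (by linarith)
  have hβμ : 0 < β * μ := mul_pos hβ hμ0
  obtain ⟨hrm0, hrmR⟩ := hrm
  have hhalf : R / 2 ∈ Set.Ioo (0:ℝ) R := ⟨by linarith, by linarith⟩
  have hfm : deriv f r_m < 0 :=
    lt_of_le_of_lt (hmin _ ⟨hhalf.1.le, hhalf.2.le⟩) (hneg _ hhalf)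
  have hfle : ∀ r ∈ Set.Icc 0 R, deriv f r ≤ 0 := by
    intro r hr
    rcases eq_or_lt_of_le hr.1 with h0 | h0
    · rw [← h0, hf'0]
    rcases eq_or_lt_of_le hr.2 with hRr | hRr
    · subst hRr
      have hcont : ContinuousAt (deriv f) r := (hf2 r ⟨h0, le_rfl⟩).continuousAt
      have htend : Filter.Tendsto (deriv f) (nhdsWithin r (Set.Iio r))
          (nhds (deriv f r)) := hcont.tendsto.mono_left nhdsWithin_le_nhds
      refine le_of_tendsto htend ?_
      filter_upwards [Ioo_mem_nhdsLT_of_mem (Set.mem_Ioc.2 ⟨h0, le_rfl⟩)] with x hx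
      exact (hneg x hx).le
    · exact (hneg r ⟨h0, hRr⟩).le
  -- part 1
  have hdiffm : DifferentiableAt ℝ (deriv f) r_m := hf2 r_m ⟨hrm0, hrmR⟩
  have hev : ∀ᶠ s in nhds r_m, deriv f s < 0 :=
    hdiffm.continuousAt (Iio_mem_nhds hfm)
  have heq : (fun s => |deriv f s| ^ (p - 2) * deriv f s) =ᶠ[nhds r_m]
      (fun s => -(-deriv f s) ^ (p - 1)) := by
    filter_upwards [hev] with s hs
    have hne : -deriv f s ≠ 0 := ne_of_gt (neg_pos.2 hs)
    rw [abs_of_neg hs, show p - 1 = p - 2 + 1 by ring, Real.rpow_add_one hne]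
    ring
  have hu : HasDerivAt (deriv f) (deriv (deriv f) r_m) r_m := hdiffm.hasDerivAt
  have hpow : HasDerivAt (fun s => (-deriv f s) ^ (p - 1))
      ((p - 1) * (-deriv f r_m) ^ (p - 1 - 1) * -(deriv (deriv f) r_m)) r_m := by
    have h1 : HasDerivAt (fun s => -deriv f s) (-(deriv (deriv f) r_m)) r_m := hu.neg
    have h2 := Real.hasDerivAt_rpow_const
      (x := -deriv f r_m) (p := p - 1) (Or.inl (ne_of_gt (neg_pos.2 hfm)))
    exact h2.comp r_m h1
  have hg' : deriv (fun s => |deriv f s| ^ (p - 2) * deriv f s) r_m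
      = (p - 1) * (-deriv f r_m) ^ (p - 2) * deriv (deriv f) r_m := by
    rw [Filter.EventuallyEq.deriv_eq heq, HasDerivAt.deriv (f := fun s => -(-deriv f s) ^ (p - 1)) hpow.neg,
      show p - 1 - 1 = p - 2 by ring]
    ring
  have hg'le : deriv (fun s => |deriv f s| ^ (p - 2) * deriv f s) r_m ≤ 0 := by
    rw [hg']
    exact mul_nonpos_of_nonneg_of_nonpos
      (mul_nonneg (by linarith) (Real.rpow_nonneg (by linarith) _)) hsec
  have ht2 : ((N : ℝ) - 1) / r_m * (|deriv f r_m| ^ (p - 2) * deriv f r_m) ≤ 0 :=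
    mul_nonpos_of_nonneg_of_nonpos (div_nonneg (by linarith) hrm0.le)
      (mul_nonpos_of_nonneg_of_nonpos (Real.rpow_nonneg (abs_nonneg _) _) hfm.le)
  have ht4 : β * r_m * deriv f r_m ≤ 0 :=
    mul_nonpos_of_nonneg_of_nonpos (by positivity) hfm.le
  have hode' := hode r_m ⟨hrm0, hrmR⟩
  have hpart1 : |deriv f r_m| ^ (p / 2) ≤ β * μ * f r_m := by linarith
  refine ⟨hpart1, ?_⟩
  -- part 2
  have hanti : StrictAntiOn f (Set.Icc 0 R) := by
    apply strictAntiOn_of_deriv_neg (convex_Icc 0 R) hfc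
    intro x hx
    rw [interior_Icc] at hx
    exact hneg x hx
  have hfrm1 : f r_m ≤ 1 := by
    have := hanti (Set.mem_Icc.2 ⟨le_rfl, hR.le⟩) (Set.mem_Icc.2 ⟨hrm0.le, hrmR⟩) hrm0
    rw [hf0] at this
    exact this.le
  have hle2 : |deriv f r_m| ^ (p / 2) ≤ β * μ := by
    calc |deriv f r_m| ^ (p / 2) ≤ β * μ * f r_m := hpart1
      _ ≤ β * μ * 1 := mul_le_mul_of_nonneg_left hfrm1 hβμ.le
      _ = β * μ := mul_one _
  have hbound : |deriv f r_m| ≤ (β * μ) ^ (2 / p) := by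
    have h2p : (0:ℝ) ≤ 2 / p := by positivity
    have h := Real.rpow_le_rpow (Real.rpow_nonneg (abs_nonneg _) _) hle2 h2p
    rw [← Real.rpow_mul (abs_nonneg _), show p / 2 * (2 / p) = 1 by
      field_simp, Real.rpow_one] at h
    exact h
  intro r hr
  have h1 : |deriv f r| ≤ |deriv f r_m| := by
    rw [abs_of_nonpos (hfle r hr), abs_of_neg hfm]
    exact neg_le_neg (hmin r hr)
  exact h1.trans hbound
end

section
/- Define the energy E(r) := ((p-1)/p)|f'(r)|^p + (μβ/2) f(r)². If f is a solution of the profile ODE with f' < 0 on (0,∞), then E is nonincreasing; more precisely E'(r) = −((N-1)/r)|f'(r)|^p − β r |f'(r)|² − |f'(r)|^{(p+2)/2} ≤ 0 for r > 0. -/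
theorem energy_decreasing (N : ℕ) (hN : 1 ≤ N) (p μ β : ℝ)
    (hp1 : 2 * N / (N + 1) < p) (hp2 : p < 2)
    (hμ : μ = p / (2 - p)) (hβ : 0 < β)
    (f : ℝ → ℝ) (hf : ContDiffOn ℝ 2 f (Set.Ioi 0))
    (hode : ∀ r > 0,
      deriv (fun s => |deriv f s| ^ (p - 2) * deriv f s) r
        + ((N : ℝ) - 1) / r * (|deriv f r| ^ (p - 2) * deriv f r)
        + β * μ * f r + β * r * deriv f r - |deriv f r| ^ (p / 2) = 0)
    (hneg : ∀ r > 0, deriv f r < 0) :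
    ∀ r > 0,
      deriv (fun s => (p - 1) / p * |deriv f s| ^ p + μ * β / 2 * f s ^ 2) r
        = -(((N : ℝ) - 1) / r) * |deriv f r| ^ p - β * r * |deriv f r| ^ 2
          - |deriv f r| ^ ((p + 2) / 2)
      ∧ deriv (fun s => (p - 1) / p * |deriv f s| ^ p + μ * β / 2 * f s ^ 2) r ≤ 0 := by
  intro r hr
  have hmem : Set.Ioi (0:ℝ) ∈ nhds r := isOpen_Ioi.mem_nhds hr
  have hfd : DifferentiableAt ℝ f r :=
    (hf.differentiableOn (by norm_num)).differentiableAt hmem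
  have hgC : ContDiffOn ℝ 1 (deriv f) (Set.Ioi 0) :=
    hf.deriv_of_isOpen isOpen_Ioi (by norm_num)
  have hgd : DifferentiableAt ℝ (deriv f) r :=
    (hgC.differentiableOn (by norm_num)).differentiableAt hmem
  set a := deriv f r with ha
  have haneg : a < 0 := hneg r hr
  set b := -a with hbdef
  have hb : 0 < b := neg_pos.mpr haneg
  set g' := deriv (deriv f) r with hg'
  have hg : HasDerivAt (deriv f) g' r := hgd.hasDerivAt
  have hfa : HasDerivAt f a r := hfd.hasDerivAt
  have hev : ∀ᶠ s in nhds r, deriv f s < 0 :=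
    hgd.continuousAt (Iio_mem_nhds haneg)
  -- derivative of the rpow compositions
  have hneg' : HasDerivAt (fun s => -(deriv f s)) (-g') r := hg.neg
  have hpow1 : HasDerivAt (fun x : ℝ => x ^ (p - 1))
      ((p - 1) * b ^ (p - 1 - 1)) b :=
    Real.hasDerivAt_rpow_const (Or.inl hb.ne')
  have hw0 : HasDerivAt (fun s => -((-(deriv f s)) ^ (p - 1)))
      (-((p - 1) * b ^ (p - 1 - 1) * -g')) r := by have := (hpow1.comp r hneg').neg; exact this
  have hweq : (fun s => |deriv f s| ^ (p - 2) * deriv f s)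
      =ᶠ[nhds r] fun s => -((-(deriv f s)) ^ (p - 1)) := by
    filter_upwards [hev] with s hs
    have h1 : |deriv f s| = -(deriv f s) := abs_of_neg hs
    have h2 : (0:ℝ) < -(deriv f s) := neg_pos.mpr hs
    rw [h1, show p - 1 = (p - 2) + 1 by ring, Real.rpow_add_one h2.ne']
    ring
  have hw : HasDerivAt (fun s => |deriv f s| ^ (p - 2) * deriv f s)
      (-((p - 1) * b ^ (p - 1 - 1) * -g')) r := hw0.congr_of_eventuallyEq hweq
  have hpow2 : HasDerivAt (fun x : ℝ => x ^ p) (p * b ^ (p - 1)) b :=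
    Real.hasDerivAt_rpow_const (Or.inl hb.ne')
  have hE0 : HasDerivAt (fun s => (p - 1) / p * ((-(deriv f s)) ^ p) + μ * β / 2 * f s ^ 2)
      ((p - 1) / p * (p * b ^ (p - 1) * -g') + μ * β / 2 * (2 * f r ^ 1 * a)) r :=
    ((hpow2.comp r hneg').const_mul _).add ((hfa.pow 2).const_mul _)
  have hEeq : (fun s => (p - 1) / p * |deriv f s| ^ p + μ * β / 2 * f s ^ 2)
      =ᶠ[nhds r] fun s => (p - 1) / p * ((-(deriv f s)) ^ p) + μ * β / 2 * f s ^ 2 := by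
    filter_upwards [hev] with s hs
    rw [abs_of_neg hs]
  have hE : HasDerivAt (fun s => (p - 1) / p * |deriv f s| ^ p + μ * β / 2 * f s ^ 2)
      ((p - 1) / p * (p * b ^ (p - 1) * -g') + μ * β / 2 * (2 * f r ^ 1 * a)) r :=
    hE0.congr_of_eventuallyEq hEeq
  -- rewrite the ODE
  have hode' := hode r hr
  rw [hw.deriv, abs_of_neg haneg, ← hbdef] at hode'
  -- power identities
  have e1 : b ^ (p - 1) = b ^ (p - 2) * b := by
    rw [← Real.rpow_add_one hb.ne' (p - 2)]; congr 1; ring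
  have e2 : b ^ p = b ^ (p - 1) * b := by
    rw [← Real.rpow_add_one hb.ne' (p - 1)]; congr 1; ring
  have e3 : b ^ ((p + 2) / 2) = b ^ (p / 2) * b := by
    rw [← Real.rpow_add_one hb.ne' (p / 2)]; congr 1; ring
  have hp_ne : p ≠ 0 := by
    have : (1:ℝ) ≤ 2 * N / (N + 1) := by
      rw [le_div_iff₀ (by positivity)]
      have : (1:ℝ) ≤ (N:ℝ) := by exact_mod_cast hN
      linarith
    intro h; rw [h] at hp1; linarith
  have hmain : deriv (fun s => (p - 1) / p * |deriv f s| ^ p + μ * β / 2 * f s ^ 2) r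
      = -(((N : ℝ) - 1) / r) * |deriv f r| ^ p - β * r * |deriv f r| ^ 2
          - |deriv f r| ^ ((p + 2) / 2) := by
    rw [hE.deriv, abs_of_neg haneg, ← hbdef, e3, e2, e1]
    rw [show deriv f r = a from ha.symm,
      show p - 1 - 1 = p - 2 from by ring] at hode'
    rw [hbdef] at hode' ⊢
    rw [show (p - 1) / p * (p * ((-a) ^ (p - 2) * -a) * -g')
        = (p - 1) * ((-a) ^ (p - 2) * -a) * -g' from by field_simp]
    linear_combination a * hode'
  refine ⟨hmain, ?_⟩
  rw [hmain]
  have h1 : (0:ℝ) ≤ ((N : ℝ) - 1) / r := by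
    have : (1:ℝ) ≤ (N:ℝ) := by exact_mod_cast hN
    apply div_nonneg <;> linarith
  have h2 : (0:ℝ) ≤ |deriv f r| ^ p := Real.rpow_nonneg (abs_nonneg _) _
  have h3 : (0:ℝ) ≤ β * r * |deriv f r| ^ 2 := by positivity
  have h4 : (0:ℝ) ≤ |deriv f r| ^ ((p + 2) / 2) := Real.rpow_nonneg (abs_nonneg _) _
  nlinarith [mul_nonneg h1 h2]
end

section
/- Let f, f' be nonnegative-limit functions with f nonnegative nonincreasing, E(r) := ((p-1)/p)|f'(r)|^p + (μβ/2) f(r)² nonincreasing, and f' ∈ L^{(p+2)/2}(0,∞). If E(r) → l_E and f(r) → l as r → ∞, then f'(r) → 0 as r → ∞. -/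
theorem deriv_tendsto_zero (p μ β l lE : ℝ) (hp1 : 1 < p) (hp2 : p < 2)
    (hμ : 0 < μ) (hβ : 0 < β)
    (f : ℝ → ℝ) (hf : ContDiff ℝ 1 f)
    (hfnn : ∀ r ≥ 0, 0 ≤ f r)
    (hmono : AntitoneOn f (Set.Ici 0))
    (hfl : Filter.Tendsto f Filter.atTop (nhds l))
    (hE : AntitoneOn (fun r => (p - 1) / p * |deriv f r| ^ p + μ * β / 2 * f r ^ 2)
      (Set.Ici 0))
    (hEl : Filter.Tendsto (fun r => (p - 1) / p * |deriv f r| ^ p + μ * β / 2 * f r ^ 2)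
      Filter.atTop (nhds lE))
    (hint : MeasureTheory.IntegrableOn (fun r => |deriv f r| ^ ((p + 2) / 2))
      (Set.Ioi 0)) :
    Filter.Tendsto (deriv f) Filter.atTop (nhds 0) := by
  have hp0 : (0:ℝ) < p := by linarith
  have hp1' : p - 1 ≠ 0 := by linarith
  have hpne : p ≠ 0 := ne_of_gt hp0
  -- limit of |f'|^p
  set L : ℝ := p / (p - 1) * (lE - μ * β / 2 * l ^ 2) with hLdef
  have hLp : Filter.Tendsto (fun r => |deriv f r| ^ p) Filter.atTop (nhds L) := by
    have h1 : Filter.Tendsto (fun r => μ * β / 2 * f r ^ 2) Filter.atTop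
        (nhds (μ * β / 2 * l ^ 2)) := (hfl.pow 2).const_mul _
    have h2 := hEl.sub h1
    have h3 := h2.const_mul (p / (p - 1))
    have heq : (fun r => p / (p - 1) * (((p - 1) / p * |deriv f r| ^ p
        + μ * β / 2 * f r ^ 2) - μ * β / 2 * f r ^ 2)) =
        fun r => |deriv f r| ^ p := by
      funext r; field_simp; ring
    rwa [heq] at h3
  have hL0 : 0 ≤ L :=
    ge_of_tendsto' hLp fun r => Real.rpow_nonneg (abs_nonneg _) p
  -- L = 0 by integrability
  have hLzero : L = 0 := by
    by_contra hne
    have hLpos : 0 < L := lt_of_le_of_ne hL0 (Ne.symm hne)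
    have hev : ∀ᶠ r in Filter.atTop, L / 2 ≤ |deriv f r| ^ p :=
      hLp.eventually (eventually_ge_nhds (by linarith))
    obtain ⟨a, ha⟩ := hev.exists_forall_of_atTop
    set b := max a 1 with hbdef
    have hb0 : (0:ℝ) < b := lt_of_lt_of_le one_pos (le_max_right _ _)
    set ε : ℝ := ((L / 2) ^ p⁻¹) ^ ((p + 2) / 2) with hεdef
    have hεpos : 0 < ε :=
      Real.rpow_pos_of_pos (Real.rpow_pos_of_pos (by linarith) _) _
    have hbound : ∀ r ∈ Set.Ioi b, ε ≤ |deriv f r| ^ ((p + 2) / 2) := by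
      intro r hr
      have hr' : L / 2 ≤ |deriv f r| ^ p :=
        ha r (le_trans (le_max_left _ _) (le_of_lt hr))
      have h4 : (L / 2) ^ p⁻¹ ≤ (|deriv f r| ^ p) ^ p⁻¹ :=
        Real.rpow_le_rpow (by linarith) hr' (by positivity)
      have h5 : (|deriv f r| ^ p) ^ p⁻¹ = |deriv f r| := by
        rw [← Real.rpow_mul (abs_nonneg _), mul_inv_cancel₀ hpne, Real.rpow_one]
      rw [h5] at h4
      exact Real.rpow_le_rpow (Real.rpow_nonneg (by linarith) _) h4 (by linarith)
    have hint' : MeasureTheory.IntegrableOn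
        (fun r => |deriv f r| ^ ((p + 2) / 2)) (Set.Ioi b) :=
      hint.mono_set (Set.Ioi_subset_Ioi (le_of_lt hb0))
    have hconst : MeasureTheory.Integrable (fun _ : ℝ => ε)
        (MeasureTheory.volume.restrict (Set.Ioi b)) := by
      apply hint'.mono' MeasureTheory.aestronglyMeasurable_const
      filter_upwards [MeasureTheory.ae_restrict_mem measurableSet_Ioi] with r hr
      rw [Real.norm_eq_abs, abs_of_pos hεpos]
      exact hbound r hr
    rw [MeasureTheory.integrable_const_iff] at hconst
    rcases hconst with h | h
    · exact (ne_of_gt hεpos) h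
    · replace h := MeasureTheory.measure_lt_top (MeasureTheory.volume.restrict (Set.Ioi b)) Set.univ
      rw [MeasureTheory.Measure.restrict_apply_univ, Real.volume_Ioi] at h
      exact (lt_irrefl _ h)
  rw [hLzero] at hLp
  -- conclude
  have habs : Filter.Tendsto (fun r => |deriv f r|) Filter.atTop (nhds 0) := by
    have h6 := hLp.rpow_const (p := p⁻¹) (Or.inr (by positivity))
    rw [Real.zero_rpow (by positivity)] at h6
    have heq : (fun r => (|deriv f r| ^ p) ^ p⁻¹) = fun r => |deriv f r| := by
      funext r
      rw [← Real.rpow_mul (abs_nonneg _), mul_inv_cancel₀ hpne, Real.rpow_one]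
    rwa [heq] at h6
  rw [tendsto_zero_iff_norm_tendsto_zero]
  simpa [Real.norm_eq_abs] using habs
end
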